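/- Let G be a cactus on n vertices and C an odd cycle of G of length |C|. Then Σ_{e ∈ E(C)} PI(e) = (n-2)(|C| - 1) - 2. -/

import Mathlib

open SimpleGraph Finset
open scoped Classical

variable {V : Type*}

/-- Number of vertices strictly closer to `x` than to `y` (excluding `x` and `y`). -/
noncomputable def nclose (G : SimpleGraph V) (x y : V) : ℕ :=
  Nat.card {w : V | w ≠ x ∧ w ≠ y ∧ G.dist w x < G.dist w y}

/-- The contribution `PI(e) = n_{xy}(x) + n_{xy}(y)` of an edge. -/
noncomputable def PIedge (G : SimpleGraph V) : Sym2 V → ℕ :=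
  Sym2.lift ⟨fun x y => nclose G x y + nclose G y x, fun _ _ => add_comm _ _⟩

/-- The vertex PI index of a graph. -/
noncomputable def PI [Fintype V] (G : SimpleGraph V) : ℕ :=
  ∑ e ∈ G.edgeFinset, PIedge G e

/-- A cactus: connected, and any two cycles share at most one vertex. -/
def IsCactus (G : SimpleGraph V) : Prop :=
  G.Connected ∧ ∀ (u v : V) (c₁ : G.Walk u u) (c₂ : G.Walk v v),
    c₁.IsCycle → c₂.IsCycle → {e | e ∈ c₁.edges} ≠ {e | e ∈ c₂.edges} →
    Set.ncard {x | x ∈ c₁.support ∧ x ∈ c₂.support} ≤ 1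


set_option linter.unusedSectionVars false
set_option maxHeartbeats 1000000

namespace CactusAux

section ZModLemmas
variable {k : ℕ} [NeZero k]


variable {k : ℕ} [NeZero k]

noncomputable def D (u : ZMod k) : ℕ := min u.val (-u).val

lemma D_zero : D (0 : ZMod k) = 0 := by simp [D]

lemma D_eq_zero {u : ZMod k} (h : D u = 0) : u = 0 := by
  rcases Nat.min_eq_zero_iff.mp h with h' | h'
  · exact (ZMod.val_eq_zero u).mp h'
  · have := (ZMod.val_eq_zero (-u)).mp h'
    simpa using (neg_eq_zero.mp this)

lemma D_neg (u : ZMod k) : D (-u) = D u := by simp [D, min_comm]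

lemma val_add_one (u : ZMod k) : (u+1).val = (u.val + 1) % k := by
  conv_lhs => rw [← ZMod.natCast_rightInverse u]
  rw [← Nat.cast_one, ← Nat.cast_add, ZMod.val_natCast]

lemma D_formula (u : ZMod k) : D u = min u.val (if u.val = 0 then 0 else k - u.val) := by
  rw [D, ZMod.neg_val]
  by_cases h : u = 0 <;> simp [h, ZMod.val_eq_zero]

lemma D_succ_formula (hk : 3 ≤ k) (u : ZMod k) :
    D (u + 1) = if u.val + 1 = k then 0 else min (u.val + 1) (k - (u.val + 1)) := by
  have hv : (u+1).val = (u.val + 1) % k := val_add_one u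
  have hu : u.val < k := ZMod.val_lt u
  rw [D_formula]
  by_cases h : u.val + 1 = k
  · have : (u.val + 1) % k = 0 := by rw [h, Nat.mod_self]
    simp [hv, this, h]
  · have hlt : u.val + 1 < k := by omega
    have : (u.val + 1) % k = u.val + 1 := Nat.mod_eq_of_lt hlt
    rw [hv, this]
    have : u.val + 1 ≠ 0 := Nat.succ_ne_zero _
    simp [h, this]

lemma D_step (hk : 3 ≤ k) (u : ZMod k) : D u ≤ D (u + 1) + 1 := by
  have hu : u.val < k := ZMod.val_lt u
  rw [D_formula, D_succ_formula hk]
  split_ifs <;> omega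

lemma D_step' (hk : 3 ≤ k) (u : ZMod k) : D u ≤ D (u - 1) + 1 := by
  have h := D_step hk (-u)
  rw [D_neg] at h
  calc D u ≤ D (-u + 1) + 1 := h
    _ = D (-(u - 1)) + 1 := by ring_nf
    _ = D (u - 1) + 1 := by rw [D_neg]

lemma D_tie (h : ℕ) (hk : k = 2 * h + 1) (hk3 : 3 ≤ k) (u : ZMod k) :
    (D u = D (u + 1)) ↔ u.val = h := by
  have hu : u.val < k := ZMod.val_lt u
  rw [D_formula, D_succ_formula hk3]
  split_ifs with h1 h2 <;> omega


end ZModLemmas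


variable {V : Type*} {G : SimpleGraph V}

lemma support_eq_map_getVert {u v : V} (p : G.Walk u v) :
    p.support = (List.range (p.length + 1)).map p.getVert := by
  induction p with
  | nil => rfl
  | cons h q ih =>
    rw [Walk.support_cons, ih, Walk.length_cons]
    conv_rhs => rw [List.range_succ_eq_map]
    simp [List.map_map, Function.comp_def]

lemma edges_eq_map_getVert {u v : V} (p : G.Walk u v) :
    p.edges = (List.range p.length).map (fun n => s(p.getVert n, p.getVert (n+1))) := by
  induction p with
  | nil => simp
  | cons h q ih =>
    rw [Walk.edges_cons, ih, Walk.length_cons]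
    conv_rhs => rw [List.range_succ_eq_map]
    simp [List.map_map, Function.comp_def]

variable {v : V} {c : G.Walk v v}

/-- The `i`-th vertex of the closed walk `c`, indexed by `ZMod c.length`. -/
noncomputable def cx (c : G.Walk v v) (i : ZMod c.length) : V := c.getVert i.val

lemma getVert_injOn (hc : c.IsCycle) :
    ∀ m, m < c.length → ∀ n, n < c.length → c.getVert m = c.getVert n → m = n := by
  have hnd := hc.2
  have htail : c.support.tail = (List.range c.length).map (fun n => c.getVert (n+1)) := by
    rw [support_eq_map_getVert c, List.range_succ_eq_map]
    simp [List.map_map, Function.comp_def]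
  rw [htail] at hnd
  have hinj := List.inj_on_of_nodup_map hnd
  simp only [List.mem_range] at hinj
  -- hinj : ∀ m < len, ∀ n < len, getVert (m+1) = getVert (n+1) → m = n
  intro m hm n hn h
  rcases Nat.eq_zero_or_pos m with rfl | hmpos
  · rcases Nat.eq_zero_or_pos n with rfl | hnpos
    · rfl
    · exfalso
      have hk3 := hc.three_le_length
      have h0 : c.getVert (c.length - 1 + 1) = c.getVert (n - 1 + 1) := by
        calc c.getVert (c.length - 1 + 1) = c.getVert c.length := by
              congr 1; omega
          _ = v := Walk.getVert_length c
          _ = c.getVert 0 := (Walk.getVert_zero c).symm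
          _ = c.getVert n := h
          _ = c.getVert (n - 1 + 1) := by congr 1; omega
      have := hinj (show c.length - 1 < c.length by omega) (show n - 1 < c.length by omega) h0
      omega
  · rcases Nat.eq_zero_or_pos n with rfl | hnpos
    · exfalso
      have hk3 := hc.three_le_length
      have h0 : c.getVert (m - 1 + 1) = c.getVert (c.length - 1 + 1) := by
        calc c.getVert (m - 1 + 1) = c.getVert m := by congr 1; omega
          _ = c.getVert 0 := h
          _ = v := Walk.getVert_zero c
          _ = c.getVert c.length := (Walk.getVert_length c).symm
          _ = c.getVert (c.length - 1 + 1) := by congr 1; omega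
      have := hinj (show m - 1 < c.length by omega) (show c.length - 1 < c.length by omega) h0
      omega
    · have h0 : c.getVert (m - 1 + 1) = c.getVert (n - 1 + 1) := by
        rw [show m - 1 + 1 = m by omega, show n - 1 + 1 = n by omega]; exact h
      have := hinj (show m - 1 < c.length by omega) (show n - 1 < c.length by omega) h0
      omega

lemma cx_injective (hc : c.IsCycle) : Function.Injective (cx c) := by
  haveI : NeZero c.length := ⟨by have := hc.three_le_length; omega⟩
  intro i j h
  have := getVert_injOn hc i.val (ZMod.val_lt i) j.val (ZMod.val_lt j) h
  exact ZMod.val_injective _ this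

lemma getVert_mem_support' {u w : V} (p : G.Walk u w) (n : ℕ) : p.getVert n ∈ p.support := by
  rcases le_or_gt n p.length with h | h
  · exact Walk.mem_support_iff_exists_getVert.mpr ⟨n, rfl, h⟩
  · rw [Walk.getVert_of_length_le p h.le]
    exact Walk.end_mem_support p

lemma cx_mem_support (i : ZMod c.length) : cx c i ∈ c.support :=
  getVert_mem_support' _ _

lemma mem_support_iff_cx (hc : c.IsCycle) {y : V} :
    y ∈ c.support ↔ ∃ i, cx c i = y := by
  haveI : NeZero c.length := ⟨by have := hc.three_le_length; omega⟩
  constructor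
  · intro h
    obtain ⟨n, hn, hle⟩ := Walk.mem_support_iff_exists_getVert.mp h
    rcases Nat.lt_or_ge n c.length with hlt | hge
    · exact ⟨(n : ZMod c.length), by
        simp [cx, ZMod.val_natCast, Nat.mod_eq_of_lt hlt, hn]⟩
    · have hn' : n = c.length := le_antisymm hle hge
      refine ⟨0, ?_⟩
      simp only [cx, ZMod.val_zero, Walk.getVert_zero]
      rw [← hn, hn', Walk.getVert_length]
  · rintro ⟨i, rfl⟩; exact cx_mem_support i

lemma adj_cx (hc : c.IsCycle) (i : ZMod c.length) : G.Adj (cx c i) (cx c (i + 1)) := by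
  haveI : NeZero c.length := ⟨by have := hc.three_le_length; omega⟩
  have hu : i.val < c.length := ZMod.val_lt i
  have hv : (i+1).val = (i.val + 1) % c.length := by
    conv_lhs => rw [← ZMod.natCast_rightInverse i]
    rw [← Nat.cast_one, ← Nat.cast_add, ZMod.val_natCast]
  rcases Nat.lt_or_ge (i.val + 1) c.length with hlt | hge
  · rw [cx, cx, hv, Nat.mod_eq_of_lt hlt]
    exact c.adj_getVert_succ hu
  · have : i.val + 1 = c.length := by omega
    rw [cx, cx, hv, this, Nat.mod_self]
    have h0 : c.getVert 0 = c.getVert (i.val + 1) := by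
      rw [Walk.getVert_zero, this, Walk.getVert_length]
    rw [h0]
    exact c.adj_getVert_succ hu

lemma cx_succ_getVert (hc : c.IsCycle) (n : ℕ) (hn : n < c.length) :
    cx c ((n : ZMod c.length) + 1) = c.getVert (n + 1) := by
  haveI : NeZero c.length := ⟨by have := hc.three_le_length; omega⟩
  have hv : ((n : ZMod c.length)+1).val = (n + 1) % c.length := by
    rw [← Nat.cast_one, ← Nat.cast_add, ZMod.val_natCast]
  rcases Nat.lt_or_ge (n + 1) c.length with hlt | hge
  · rw [cx, hv, Nat.mod_eq_of_lt hlt]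
  · have h1 : n + 1 = c.length := by omega
    rw [cx, hv, h1, Nat.mod_self, Walk.getVert_zero, Walk.getVert_length]

lemma cx_natCast (hc : c.IsCycle) (n : ℕ) (hn : n < c.length) :
    cx c (n : ZMod c.length) = c.getVert n := by
  haveI : NeZero c.length := ⟨by have := hc.three_le_length; omega⟩
  rw [cx, ZMod.val_natCast, Nat.mod_eq_of_lt hn]

lemma mem_edges_iff_cx (hc : c.IsCycle) {e : Sym2 V} :
    e ∈ c.edges ↔ ∃ i, e = s(cx c i, cx c (i + 1)) := by
  haveI : NeZero c.length := ⟨by have := hc.three_le_length; omega⟩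
  rw [edges_eq_map_getVert, List.mem_map]
  constructor
  · rintro ⟨n, hn, rfl⟩
    rw [List.mem_range] at hn
    exact ⟨(n : ZMod c.length), by rw [cx_natCast hc n hn, cx_succ_getVert hc n hn]⟩
  · rintro ⟨i, rfl⟩
    refine ⟨i.val, List.mem_range.mpr (ZMod.val_lt i), ?_⟩
    have h1 : cx c i = c.getVert i.val := rfl
    have h2 : cx c (i + 1) = c.getVert (i.val + 1) := by
      have := cx_succ_getVert hc i.val (ZMod.val_lt i)
      rwa [ZMod.natCast_rightInverse i] at this
    rw [h1, h2]


lemma mem_support_rotate {u y : V} (hu : u ∈ c.support) :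
    y ∈ (c.rotate _ hu).support ↔ y ∈ c.support := by
  rw [Walk.rotate]
  rw [Walk.mem_support_append_iff]
  conv_rhs => rw [← Walk.take_spec c hu, Walk.mem_support_append_iff]
  tauto

/-- The key cactus surgery lemma: there is no "extra" path between two distinct
vertices of the cycle `c` that avoids the cycle. -/
lemma no_extra_path [Fintype V] (hG : IsCactus G) (hc : c.IsCycle)
    {a b : ZMod c.length} (hab : cx c a ≠ cx c b)
    (R : G.Walk (cx c a) (cx c b)) (hR : R.IsPath)
    (hsupp : ∀ y ∈ R.support, y ∈ c.support → y = cx c a ∨ y = cx c b)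
    (hedge : ∀ e ∈ R.edges, e ∉ c.edges) : False := by
  classical
  have hbmem : cx c b ∈ c.support := cx_mem_support b
  set c' : G.Walk (cx c b) (cx c b) := c.rotate _ hbmem with hc'def
  have hc' : c'.IsCycle := hc.rotate hbmem
  have hc'nn : ¬ c'.Nil := hc'.not_nil
  obtain ⟨z, hadj, q, hq⟩ := Walk.not_nil_iff.mp hc'nn
  have hqpath : q.IsPath := ((Walk.cons_isCycle_iff q hadj).mp (hq ▸ hc')).1
  have hqsupp : ∀ y ∈ q.support, y ∈ c.support := by
    intro y hy
    have : y ∈ c'.support := by rw [hq, Walk.support_cons]; exact List.mem_cons_of_mem _ hy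
    exact (mem_support_rotate hbmem).mp this
  have hqedges : ∀ e ∈ q.edges, e ∈ c.edges := by
    intro e he
    have : e ∈ c'.edges := by rw [hq, Walk.edges_cons]; exact List.mem_cons_of_mem _ he
    exact (Walk.rotate_edges c _ hbmem).mem_iff.mp this
  -- cx c a is in q.support
  have hamem : cx c a ∈ q.reverse.support := by
    have h1 : cx c a ∈ c'.support := (mem_support_rotate hbmem).mpr (cx_mem_support a)
    rw [hq, Walk.support_cons] at h1
    rcases List.mem_cons.mp h1 with h | h
    · exact absurd h hab
    · rw [Walk.support_reverse]; exact List.mem_reverse.mpr h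
  set arc : G.Walk (cx c b) (cx c a) := q.reverse.takeUntil (cx c a) hamem with harcdef
  have harcpath : arc.IsPath := hqpath.reverse.takeUntil hamem
  have harcsupp : ∀ y ∈ arc.support, y ∈ c.support := by
    intro y hy
    have h1 : y ∈ q.reverse.support := Walk.support_takeUntil_subset _ hamem hy
    rw [Walk.support_reverse, List.mem_reverse] at h1
    exact hqsupp y h1
  have harcedges : ∀ e ∈ arc.edges, e ∈ c.edges := by
    intro e he
    have h1 : e ∈ q.reverse.edges := Walk.edges_takeUntil_subset _ hamem he
    rw [Walk.edges_reverse, List.mem_reverse] at h1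
    exact hqedges e h1
  -- the second cycle
  set c₂ : G.Walk (cx c a) (cx c a) := R.append arc with hc₂def
  have hRnn : ¬ R.Nil := Walk.not_nil_of_ne hab
  have hc₂ : c₂.IsCycle := by
    rw [Walk.isCycle_def]
    refine ⟨?_, ?_, ?_⟩
    · -- trail
      rw [Walk.isTrail_def, Walk.edges_append, List.nodup_append]
      refine ⟨hR.isTrail.edges_nodup, harcpath.isTrail.edges_nodup, ?_⟩
      intro e heR _ heA rfl
      exact hedge e heR (harcedges e heA)
    · -- not nil
      intro h
      have h0 : c₂.length = 0 := by
        rw [h]; rfl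
      rw [hc₂def, Walk.length_append] at h0
      have h1 : ¬ R.Nil := Walk.not_nil_of_ne hab
      rw [Walk.not_nil_iff_lt_length] at h1
      omega
    · -- support tail nodup
      rw [Walk.tail_support_append, List.nodup_append]
      refine ⟨hR.support_nodup.tail, harcpath.support_nodup.tail, ?_⟩
      intro y hyR _ hyA rfl
      have hyR' : y ∈ R.support := List.mem_of_mem_tail hyR
      have hyA' : y ∈ arc.support := List.mem_of_mem_tail hyA
      rcases hsupp y hyR' (harcsupp y hyA') with rfl | rfl
      · -- y = cx c a, but cx c a is head of R, not in tail
        have := hR.support_nodup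
        rw [Walk.support_eq_cons] at this
        exact (List.nodup_cons.mp this).1 hyR
      · -- y = cx c b, head of arc
        have := harcpath.support_nodup
        rw [Walk.support_eq_cons] at this
        exact (List.nodup_cons.mp this).1 hyA
  -- pick an edge of R
  obtain ⟨z₀, hadj₀, R', hR'⟩ := Walk.not_nil_iff.mp hRnn
  have he₀R : s(cx c a, z₀) ∈ R.edges := by rw [hR', Walk.edges_cons]; exact List.mem_cons_self
  have he₀c₂ : s(cx c a, z₀) ∈ c₂.edges := by
    rw [hc₂def, Walk.edges_append]
    exact List.mem_append_left _ he₀R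
  have he₀c : s(cx c a, z₀) ∉ c.edges := hedge _ he₀R
  -- apply the cactus property
  have hne : {e | e ∈ c.edges} ≠ {e | e ∈ c₂.edges} := by
    intro h
    have : s(cx c a, z₀) ∈ {e | e ∈ c.edges} := h ▸ he₀c₂
    exact he₀c this
  have hcard := hG.2 v (cx c a) c c₂ hc hc₂ hne
  have h2 : 1 < Set.ncard {x | x ∈ c.support ∧ x ∈ c₂.support} := by
    rw [Set.one_lt_ncard (Set.toFinite _)]
    refine ⟨cx c a, ⟨cx_mem_support a, Walk.start_mem_support c₂⟩,
            cx c b, ⟨hbmem, ?_⟩, hab⟩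
    rw [hc₂def, Walk.mem_support_append_iff]
    exact Or.inl (Walk.end_mem_support R)
  omega




lemma firstHit : ∀ {w u : V} (P : G.Walk w u), P.IsPath → u ∈ c.support →
    ∃ (y : V) (Q : G.Walk w y) (R : G.Walk y u), y ∈ c.support ∧ P = Q.append R ∧
      ∀ z ∈ Q.support, z ∈ c.support → z = y := by
  intro w u P
  induction P with
  | nil =>
    intro _ hu
    exact ⟨_, Walk.nil, Walk.nil, hu, rfl, by intro z hz _; simpa using hz⟩
  | @cons w w' u hadj P' ih =>
    intro hP hu
    by_cases hwc : w ∈ c.support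
    · refine ⟨w, Walk.nil, Walk.cons hadj P', hwc, rfl, ?_⟩
      intro z hz _; simpa using hz
    · obtain ⟨y, Q', R', hy, heq, hcond⟩ := ih hP.of_cons hu
      refine ⟨y, Walk.cons hadj Q', R', hy, ?_, ?_⟩
      · rw [Walk.cons_append, heq]
      · intro z hz hzc
        rw [Walk.support_cons] at hz
        rcases List.mem_cons.mp hz with rfl | hz'
        · exact absurd hzc hwc
        · exact hcond z hz' hzc

lemma cx_eq_of_length_zero (hc : c.IsCycle) {i j : ZMod c.length}
    (P : G.Walk (cx c i) (cx c j)) (h0 : P.length = 0) : i = j := by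
  apply cx_injective hc
  calc cx c i = P.getVert 0 := (P.getVert_zero).symm
    _ = P.getVert P.length := by rw [h0]
    _ = cx c j := P.getVert_length

lemma self_ne_add_one (hc : c.IsCycle) (t : ZMod c.length) : t ≠ t + 1 := by
  haveI : Fact (1 < c.length) := ⟨by have := hc.three_le_length; omega⟩
  intro h
  have h1 : (0 : ZMod c.length) = 1 := by
    have := congrArg (fun z => z - t) h
    simpa using this
  exact zero_ne_one h1

lemma dZ_le_path_length [Fintype V] (hG : IsCactus G) (hc : c.IsCycle) :
    ∀ (n : ℕ) (i j : ZMod c.length) (P : G.Walk (cx c i) (cx c j)),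
      P.IsPath → P.length ≤ n → D (j - i) ≤ P.length := by
  haveI : NeZero c.length := ⟨by have := hc.three_le_length; omega⟩
  have hk3 := hc.three_le_length
  intro n
  induction n with
  | zero =>
    intro i j P hP hl
    have h0 : P.length = 0 := Nat.le_zero.mp hl
    have hij : i = j := cx_eq_of_length_zero hc P h0
    subst hij
    simp [D_zero]
  | succ n ih =>
    intro i j P hP hl
    rcases Nat.eq_zero_or_pos P.length with h0 | hpos
    · have hij : i = j := cx_eq_of_length_zero hc P h0
      subst hij
      simp [D_zero]
    · have hnn : ¬ P.Nil := Walk.not_nil_iff_lt_length.mpr hpos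
      obtain ⟨w', hadj, P', hPeq⟩ := Walk.not_nil_iff.mp hnn
      subst hPeq
      have hP' : P'.IsPath := hP.of_cons
      have hxinotin : cx c i ∉ P'.support := ((Walk.cons_isPath_iff _ _).mp hP).2
      obtain ⟨y, Q', R', hy, heq, hcond⟩ := firstHit P' hP' (cx_mem_support j)
      obtain ⟨a, rfl⟩ := (mem_support_iff_cx hc).mp hy
      have hane : cx c a ≠ cx c i := by
        intro h
        apply hxinotin
        rw [← h, heq]
        exact (Walk.mem_support_append_iff _ _).mpr (Or.inl (Walk.end_mem_support Q'))
      have hQ'path : Q'.IsPath := by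
        rw [heq] at hP'; exact hP'.of_append_left
      have hLpath : (Walk.cons hadj Q').IsPath := by
        refine hQ'path.cons ?_
        intro hmem
        exact hxinotin (heq ▸ (Walk.mem_support_append_iff _ _).mpr (Or.inl hmem))
      have hLsupp : ∀ z ∈ (Walk.cons hadj Q').support, z ∈ c.support →
          z = cx c i ∨ z = cx c a := by
        intro z hz hzc
        rw [Walk.support_cons] at hz
        rcases List.mem_cons.mp hz with rfl | hz'
        · exact Or.inl rfl
        · exact Or.inr (hcond z hz' hzc)
      by_cases hE : ∀ e ∈ (Walk.cons hadj Q').edges, e ∉ c.edges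
      · exact (no_extra_path hG hc hane.symm (Walk.cons hadj Q') hLpath hLsupp hE).elim
      · push_neg at hE
        obtain ⟨e, heL, hec⟩ := hE
        obtain ⟨t, rfl⟩ := (mem_edges_iff_cx hc).mp hec
        have h1 := hLsupp _ ((Walk.cons hadj Q').fst_mem_support_of_mem_edges heL)
          (cx_mem_support t)
        have h2 := hLsupp _ ((Walk.cons hadj Q').snd_mem_support_of_mem_edges heL)
          (cx_mem_support (t+1))
        have htne : t ≠ t + 1 := self_ne_add_one hc t
        have hcase : a = i + 1 ∨ i = a + 1 := by
          rcases h1 with h1i | h1a <;> rcases h2 with h2i | h2a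
          · exact absurd (cx_injective hc (h1i.trans h2i.symm)) htne
          · left
            have e1 : t = i := cx_injective hc h1i
            have e2 : t + 1 = a := cx_injective hc h2a
            rw [← e2, e1]
          · right
            have e1 : t = a := cx_injective hc h1a
            have e2 : t + 1 = i := cx_injective hc h2i
            rw [← e2, e1]
          · exact absurd (cx_injective hc (h1a.trans h2a.symm)) htne
        have hR'path : R'.IsPath := by
          rw [heq] at hP'; exact hP'.of_append_right
        have hR'len : R'.length ≤ n := by
          have hsplit : P'.length = Q'.length + R'.length := by
            rw [heq, Walk.length_append]
          have hl' : P'.length + 1 ≤ n + 1 := by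
            simpa using hl
          omega
        have hIH := ih a j R' hR'path hR'len
        have hstep : D (j - i) ≤ D (j - a) + 1 := by
          rcases hcase with rfl | rfl
          · have := D_step' hk3 (j - i)
            have harg : j - (i + 1) = j - i - 1 := by ring
            rwa [harg]
          · have := D_step hk3 (j - (a+1))
            have harg : j - (a + 1) + 1 = j - a := by ring
            rwa [harg] at this
        calc D (j - i) ≤ D (j - a) + 1 := hstep
          _ ≤ R'.length + 1 := by omega
          _ ≤ P'.length + 1 := by
              have : P'.length = Q'.length + R'.length := by rw [heq, Walk.length_append]
              omega
          _ = (Walk.cons hadj P').length := by rw [Walk.length_cons]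

lemma adj_getVert_mod (hc : c.IsCycle) (n : ℕ) :
    G.Adj (c.getVert (n % c.length)) (c.getVert ((n+1) % c.length)) := by
  have hk3 := hc.three_le_length
  have hr : n % c.length < c.length := Nat.mod_lt _ (by omega)
  have hmod : (n + 1) % c.length = (n % c.length + 1) % c.length := by
    conv_lhs => rw [Nat.add_mod]
    rw [Nat.mod_eq_of_lt (show 1 < c.length by omega)]
  rcases Nat.lt_or_ge (n % c.length + 1) c.length with hlt | hge
  · have : (n+1) % c.length = n % c.length + 1 := by
      rw [hmod, Nat.mod_eq_of_lt hlt]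
    rw [this]
    exact c.adj_getVert_succ hr
  · have heq : n % c.length + 1 = c.length := by omega
    have : (n+1) % c.length = 0 := by rw [hmod, heq, Nat.mod_self]
    rw [this]
    have h0 : c.getVert 0 = c.getVert (n % c.length + 1) := by
      rw [Walk.getVert_zero, heq, Walk.getVert_length]
    rw [h0]
    exact c.adj_getVert_succ hr

lemma exists_walk_len (hc : c.IsCycle) (s m : ℕ) :
    ∃ W : G.Walk (c.getVert (s % c.length)) (c.getVert ((s + m) % c.length)),
      W.length = m := by
  induction m with
  | zero => exact ⟨Walk.nil, rfl⟩
  | succ m ih =>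
    obtain ⟨W, hW⟩ := ih
    refine ⟨W.concat (adj_getVert_mod hc (s + m)), ?_⟩
    rw [Walk.length_concat, hW]

lemma dist_cx_le (hG : IsCactus G) (hc : c.IsCycle) (i j : ZMod c.length) :
    G.dist (cx c i) (cx c j) ≤ D (j - i) := by
  haveI : NeZero c.length := ⟨by have := hc.three_le_length; omega⟩
  have key : ∀ a b : ZMod c.length, G.dist (cx c a) (cx c b) ≤ (b - a).val := by
    intro a b
    obtain ⟨W, hW⟩ := exists_walk_len (G := G) hc a.val (b - a).val
    have h1 : a.val % c.length = a.val := Nat.mod_eq_of_lt (ZMod.val_lt a)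
    have h2 : (a.val + (b - a).val) % c.length = b.val := by
      have hcast : ((a.val + (b - a).val : ℕ) : ZMod c.length) = b := by
        rw [Nat.cast_add, ZMod.natCast_rightInverse a, ZMod.natCast_rightInverse (b - a)]
        ring
      calc (a.val + (b - a).val) % c.length
          = ((a.val + (b - a).val : ℕ) : ZMod c.length).val := (ZMod.val_natCast _ _).symm
        _ = b.val := by rw [hcast]
    have hu' : c.getVert (a.val % c.length) = cx c a := by rw [h1]; rfl
    have hv' : c.getVert ((a.val + (b - a).val) % c.length) = cx c b := by rw [h2]; rfl
    calc G.dist (cx c a) (cx c b) ≤ (W.copy hu' hv').length := SimpleGraph.dist_le _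
      _ = (b - a).val := by rw [Walk.length_copy, hW]
  have hb1 := key i j
  have hb2 := key j i
  rw [SimpleGraph.dist_comm] at hb2
  have hneg : -(j - i) = i - j := by ring
  rw [D, hneg]
  exact le_min hb1 hb2

lemma dist_cx [Fintype V] (hG : IsCactus G) (hc : c.IsCycle) (i j : ZMod c.length) :
    G.dist (cx c i) (cx c j) = D (j - i) := by
  refine le_antisymm (dist_cx_le hG hc i j) ?_
  obtain ⟨P, hPpath, hPlen⟩ := hG.1.exists_path_of_dist (cx c i) (cx c j)
  rw [← hPlen]
  exact dZ_le_path_length hG hc P.length i j P hPpath le_rfl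

lemma exists_gate [Fintype V] (hG : IsCactus G) (hc : c.IsCycle) (w : V) :
    ∃ p : ZMod c.length, ∀ i, G.dist w (cx c i) = G.dist w (cx c p) + D (i - p) := by
  haveI : NeZero c.length := ⟨by have := hc.three_le_length; omega⟩
  have hdec : ∀ i : ZMod c.length, ∃ (y : V) (Q : G.Walk w y) (R : G.Walk y (cx c i)),
      y ∈ c.support ∧ (Q.append R).IsPath ∧ (Q.append R).length = G.dist w (cx c i) ∧
      (∀ z ∈ Q.support, z ∈ c.support → z = y) := by
    intro i
    obtain ⟨P, hPpath, hPlen⟩ := hG.1.exists_path_of_dist w (cx c i)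
    obtain ⟨y, Q, R, hy, heq, hcond⟩ := firstHit P hPpath (cx_mem_support i)
    exact ⟨y, Q, R, hy, heq ▸ hPpath, heq ▸ hPlen, hcond⟩
  obtain ⟨y0, Q0, R0, hy0, hP0, hL0, hcond0⟩ := hdec 0
  obtain ⟨p, rfl⟩ := (mem_support_iff_cx hc).mp hy0
  refine ⟨p, fun i => ?_⟩
  obtain ⟨y1, Q1, R1, hy1, hP1, hL1, hcond1⟩ := hdec i
  obtain ⟨a, rfl⟩ := (mem_support_iff_cx hc).mp hy1
  have hap : a = p := by
    by_contra hne'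
    have hne : cx c a ≠ cx c p := fun h => hne' (cx_injective hc h)
    set S : G.Walk (cx c a) (cx c p) := Q1.reverse.append Q0 with hSdef
    set T : G.Walk (cx c a) (cx c p) := S.bypass with hTdef
    have hTsub : ∀ z ∈ T.support, z ∈ Q1.support ∨ z ∈ Q0.support := by
      intro z hz
      have : z ∈ S.support := Walk.support_bypass_subset S hz
      rw [hSdef, Walk.mem_support_append_iff] at this
      rcases this with h | h
      · left; rw [Walk.support_reverse, List.mem_reverse] at h; exact h
      · right; exact h
    have hTsupp : ∀ z ∈ T.support, z ∈ c.support → z = cx c a ∨ z = cx c p := by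
      intro z hz hzc
      rcases hTsub z hz with h | h
      · exact Or.inl (hcond1 z h hzc)
      · exact Or.inr (hcond0 z h hzc)
    have hTedges : ∀ e ∈ T.edges, e ∉ c.edges := by
      intro e heT hec
      obtain ⟨t, rfl⟩ := (mem_edges_iff_cx hc).mp hec
      have h1 := hTsupp _ (T.fst_mem_support_of_mem_edges heT) (cx_mem_support t)
      have h2 := hTsupp _ (T.snd_mem_support_of_mem_edges heT) (cx_mem_support (t+1))
      have htne : t ≠ t + 1 := self_ne_add_one hc t
      have heS : s(cx c t, cx c (t+1)) ∈ S.edges := Walk.edges_bypass_subset S heT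
      rw [hSdef, Walk.edges_append, List.mem_append] at heS
      -- in both cases, both cx a and cx p would be in the same leg's support
      have hboth : (cx c p ∈ Q1.support → False) ∧ (cx c a ∈ Q0.support → False) := by
        constructor
        · intro hmem
          exact hne ((hcond1 _ hmem (cx_mem_support p)).symm ▸ rfl)
        · intro hmem
          exact hne (hcond0 _ hmem (cx_mem_support a))
      rcases heS with hQ1 | hQ0
      · rw [Walk.edges_reverse, List.mem_reverse] at hQ1
        have hm1 : cx c t ∈ Q1.support := Q1.fst_mem_support_of_mem_edges hQ1
        have hm2 : cx c (t+1) ∈ Q1.support := Q1.snd_mem_support_of_mem_edges hQ1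
        rcases h1 with e1 | e1 <;> rcases h2 with e2 | e2
        · exact htne (cx_injective hc (e1.trans e2.symm))
        · exact hboth.1 (e2 ▸ hm2)
        · exact hboth.1 (e1 ▸ hm1)
        · exact htne (cx_injective hc (e1.trans e2.symm))
      · have hm1 : cx c t ∈ Q0.support := Q0.fst_mem_support_of_mem_edges hQ0
        have hm2 : cx c (t+1) ∈ Q0.support := Q0.snd_mem_support_of_mem_edges hQ0
        rcases h1 with e1 | e1 <;> rcases h2 with e2 | e2
        · exact htne (cx_injective hc (e1.trans e2.symm))
        · exact hboth.2 (e1 ▸ hm1)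
        · exact hboth.2 (e2 ▸ hm2)
        · exact htne (cx_injective hc (e1.trans e2.symm))
    exact no_extra_path hG hc hne T (Walk.bypass_isPath S) hTsupp hTedges
  subst hap
  have hsplit : Q1.length + R1.length = G.dist w (cx c i) := by
    rw [← hL1, Walk.length_append]
  have hQ1 : G.dist w (cx c a) ≤ Q1.length := SimpleGraph.dist_le Q1
  have hR1 : D (i - a) ≤ R1.length := by
    rw [← dist_cx hG hc a i]
    exact SimpleGraph.dist_le R1
  have htri : G.dist w (cx c i) ≤ G.dist w (cx c a) + D (i - a) := by
    have := hG.1.dist_triangle (u := w) (v := cx c a) (w := cx c i)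
    rwa [dist_cx hG hc a i] at this
  omega

end CactusAux

open CactusAux in
theorem stmt_11 [Fintype V] (G : SimpleGraph V) (hG : IsCactus G)
    (v : V) (c : G.Walk v v) (hc : c.IsCycle) (hodd : Odd c.length) :
    ∑ e ∈ c.edges.toFinset, PIedge G e =
      (Fintype.card V - 2) * (c.length - 1) - 2 := by
  classical
  have hk3 := hc.three_le_length
  haveI : NeZero c.length := ⟨by omega⟩
  obtain ⟨hh, hkodd⟩ := hodd
  have hh1 : 1 ≤ hh := by omega
  have hhlt : hh < c.length := by omega
  set n := Fintype.card V with hn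
  have hnk : c.length ≤ n := by
    have := Fintype.card_le_of_injective (cx c) (cx_injective hc)
    simpa [ZMod.card] using this
  -- the gate function
  choose gate hgate using CactusAux.exists_gate hG hc
  have hgate_cx : ∀ t, gate (cx c t) = t := by
    intro t
    have h := hgate (cx c t) t
    rw [SimpleGraph.dist_self] at h
    have hD : D (t - gate (cx c t)) = 0 := by omega
    exact (sub_eq_zero.mp (D_eq_zero hD)).symm
  -- tie characterization
  have hval_cast : ∀ u : ZMod c.length, u.val = hh ↔ u = (hh : ZMod c.length) := by
    intro u
    constructor
    · intro h
      conv_lhs => rw [← ZMod.natCast_rightInverse u]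
      rw [h]
    · intro h
      rw [h, ZMod.val_natCast, Nat.mod_eq_of_lt hhlt]
  have htie : ∀ (w : V) (i : ZMod c.length),
      (G.dist w (cx c i) = G.dist w (cx c (i+1))) ↔ gate w = i - (hh : ZMod c.length) := by
    intro w i
    have e1 := hgate w i
    have e2 := hgate w (i+1)
    have harg : i + 1 - gate w = (i - gate w) + 1 := by ring
    rw [harg] at e2
    constructor
    · intro h
      have hD : D (i - gate w) = D ((i - gate w) + 1) := by omega
      have hv : (i - gate w).val = hh := (D_tie hh hkodd hk3 _).mp hD
      have := (hval_cast _).mp hv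
      calc gate w = i - (i - gate w) := by ring
        _ = i - (hh : ZMod c.length) := by rw [this]
    · intro h
      have hv : (i - gate w).val = hh := by
        apply (hval_cast _).mpr
        rw [h]; ring
      have hD : D (i - gate w) = D ((i - gate w) + 1) := (D_tie hh hkodd hk3 _).mpr hv
      omega
  -- per-edge computation
  have hnc : ∀ x y : V, nclose G x y =
      (univ.filter (fun w => w ≠ x ∧ w ≠ y ∧ G.dist w x < G.dist w y)).card := by
    intro x y
    calc nclose G x y = Fintype.card {w : V | w ≠ x ∧ w ≠ y ∧ G.dist w x < G.dist w y} :=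
          Nat.card_eq_fintype_card
      _ = ({w : V | w ≠ x ∧ w ≠ y ∧ G.dist w x < G.dist w y} : Set V).toFinset.card :=
          (Set.toFinset_card _).symm
      _ = (univ.filter (fun w => w ≠ x ∧ w ≠ y ∧ G.dist w x < G.dist w y)).card := by
          congr 1
          ext w
          simp
  have hPI : ∀ i : ZMod c.length,
      PIedge G s(cx c i, cx c (i+1)) =
        (n - 2) - (univ.filter (fun w => gate w = i - (hh : ZMod c.length))).card ∧
      (univ.filter (fun w => gate w = i - (hh : ZMod c.length))).card ≤ n - 2 := by
    intro i
    have hab : cx c i ≠ cx c (i+1) := fun h => self_ne_add_one hc i (cx_injective hc h)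
    set a := cx c i with hadef
    set b := cx c (i+1) with hbdef
    set F0 : Finset V := univ.filter (fun w => w ≠ a ∧ w ≠ b) with hF0def
    have hF0card : F0.card = n - 2 := by
      have hsd : F0 = univ \ {a, b} := by
        ext w
        simp only [hF0def, Finset.mem_filter, Finset.mem_univ, true_and, Finset.mem_sdiff,
          Finset.mem_insert, Finset.mem_singleton]
        tauto
      rw [hsd, Finset.card_sdiff_of_subset (Finset.subset_univ _), Finset.card_univ,
        Finset.card_pair hab]
    set T : Finset V := univ.filter (fun w => gate w = i - (hh : ZMod c.length)) with hTdef
    have hT : F0.filter (fun w => G.dist w a = G.dist w b) = T := by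
      ext w
      simp only [hF0def, hTdef, Finset.filter_filter, Finset.mem_filter, Finset.mem_univ,
        true_and]
      constructor
      · rintro ⟨⟨hwa, hwb⟩, htieq⟩
        exact (htie w i).mp htieq
      · intro hg
        refine ⟨⟨?_, ?_⟩, (htie w i).mpr hg⟩
        · intro hwa
          rw [hadef] at hwa
          rw [hwa, hgate_cx i] at hg
          have h0 : (hh : ZMod c.length) = 0 := sub_eq_self.mp hg.symm
          have hval := congrArg ZMod.val h0
          rw [ZMod.val_natCast, Nat.mod_eq_of_lt hhlt, ZMod.val_zero] at hval
          omega
        · intro hwb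
          rw [hbdef] at hwb
          rw [hwb, hgate_cx (i+1)] at hg
          have h0 : ((hh + 1 : ℕ) : ZMod c.length) = 0 := by
            push_cast
            linear_combination hg
          have hval := congrArg ZMod.val h0
          rw [ZMod.val_natCast, Nat.mod_eq_of_lt (by omega), ZMod.val_zero] at hval
          omega
    have hTle : T.card ≤ n - 2 := by
      rw [← hT, ← hF0card]
      exact Finset.card_le_card (Finset.filter_subset _ _)
    have s1 := Finset.card_filter_add_card_filter_not
      (s := F0) (p := fun w => G.dist w a < G.dist w b)
    have s2 := Finset.card_filter_add_card_filter_not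
      (s := F0.filter (fun w => ¬ G.dist w a < G.dist w b))
      (p := fun w => G.dist w b < G.dist w a)
    have eqlt : F0.filter (fun w => G.dist w a < G.dist w b) =
        univ.filter (fun w => w ≠ a ∧ w ≠ b ∧ G.dist w a < G.dist w b) := by
      ext w
      simp only [hF0def, Finset.filter_filter, Finset.mem_filter, Finset.mem_univ, true_and]
      tauto
    have eqgt : (F0.filter (fun w => ¬ G.dist w a < G.dist w b)).filter
        (fun w => G.dist w b < G.dist w a) =
        univ.filter (fun w => w ≠ b ∧ w ≠ a ∧ G.dist w b < G.dist w a) := by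
      ext w
      rw [hF0def]
      simp only [Finset.filter_filter, Finset.mem_filter, Finset.mem_univ, true_and, and_assoc]
      constructor
      · rintro ⟨h1, h2, h3, h4⟩
        exact ⟨h2, h1, h4⟩
      · rintro ⟨h2, h1, h4⟩
        exact ⟨h1, h2, by omega, h4⟩
    have eqeq : (F0.filter (fun w => ¬ G.dist w a < G.dist w b)).filter
        (fun w => ¬ G.dist w b < G.dist w a) =
        F0.filter (fun w => G.dist w a = G.dist w b) := by
      ext w
      simp only [Finset.filter_filter, Finset.mem_filter, and_assoc]
      constructor
      · rintro ⟨hF, h3, h4⟩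
        exact ⟨hF, by omega⟩
      · rintro ⟨hF, he⟩
        exact ⟨hF, by omega, by omega⟩
    have hPIe : PIedge G s(a, b) = nclose G a b + nclose G b a := by
      simp [PIedge]
    rw [eqlt] at s1
    rw [eqgt, eqeq, hT] at s2
    rw [hF0card] at s1
    constructor
    · rw [hPIe, hnc a b, hnc b a]
      omega
    · exact hTle
  -- rewrite the sum over edges
  have hset : c.edges.toFinset =
      Finset.image (fun i : ZMod c.length => s(cx c i, cx c (i+1))) univ := by
    ext e
    rw [List.mem_toFinset, mem_edges_iff_cx hc]
    simp [eq_comm]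
  have hinj : ∀ i ∈ (univ : Finset (ZMod c.length)), ∀ j ∈ univ,
      s(cx c i, cx c (i+1)) = s(cx c j, cx c (j+1)) → i = j := by
    intro i _ j _ hsym
    rw [Sym2.eq_iff] at hsym
    rcases hsym with ⟨h1, h2⟩ | ⟨h1, h2⟩
    · exact cx_injective hc h1
    · exfalso
      have e1 : i = j + 1 := cx_injective hc h1
      have e2 : i + 1 = j := cx_injective hc h2
      have h2z : ((2 : ℕ) : ZMod c.length) = 0 := by
        push_cast
        linear_combination e2 - e1
      have hval := congrArg ZMod.val h2z
      rw [ZMod.val_natCast, Nat.mod_eq_of_lt (by omega), ZMod.val_zero] at hval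
      omega
  rw [hset, Finset.sum_image hinj]
  rw [Finset.sum_congr rfl (fun i _ => (hPI i).1)]
  rw [Finset.sum_tsub_distrib (f := fun _ => n - 2)
    (g := fun i : ZMod c.length => (univ.filter (fun w => gate w = i - (hh : ZMod c.length))).card)
    univ (fun i _ => (hPI i).2)]
  have hsum1 : ∑ _i : ZMod c.length, (n - 2) = c.length * (n - 2) := by
    rw [Finset.sum_const, Finset.card_univ, ZMod.card, smul_eq_mul]
  have hsum2 : ∑ i : ZMod c.length,
      (univ.filter (fun w => gate w = i - (hh : ZMod c.length))).card = n := by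
    have hre : ∑ i : ZMod c.length,
        (univ.filter (fun w => gate w = i - (hh : ZMod c.length))).card =
        ∑ j : ZMod c.length, (univ.filter (fun w => gate w = j)).card := by
      exact Fintype.sum_equiv (Equiv.subRight (hh : ZMod c.length)) _ _ (fun i => rfl)
    rw [hre]
    rw [← Finset.card_eq_sum_card_fiberwise (f := gate) (t := univ) (fun x _ => mem_univ _)]
    exact Finset.card_univ
  rw [hsum1, hsum2]
  -- final arithmetic
  have hm : n - 2 + 2 = n := by omega
  set m := n - 2 with hmdef
  have h1 : m * (c.length - 1) + m = m * c.length := by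
    have hc1 : c.length - 1 + 1 = c.length := by omega
    calc m * (c.length - 1) + m = m * ((c.length - 1) + 1) := by ring
      _ = m * c.length := by rw [hc1]
  have key : c.length * m = m * (c.length - 1) + m := by rw [mul_comm, ← h1]
  rw [key]
  generalize m * (c.length - 1) = A
  omega
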